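/- Let p, q, x ∈ ℝ² with p ≠ q, and suppose x lies on both the circle of center p radius r₁ and the circle of center q radius r₂ (with r₁, r₂ > 0). The distance from x to the line through p and q is zero if and only if the two circles are tangent at x. -/
import Mathlib

open RealInnerProductSpace

theorem stmt_8 (p q x : EuclideanSpace ℝ (Fin 2)) (r₁ r₂ : ℝ)
    (hne : p ≠ q) (hr₁ : 0 < r₁) (hr₂ : 0 < r₂)
    (hx₁ : ‖x - p‖ = r₁) (hx₂ : ‖x - q‖ = r₂) :
    Metric.infDist x (affineSpan ℝ ({p, q} : Set (EuclideanSpace ℝ (Fin 2))) : Set (EuclideanSpace ℝ (Fin 2))) = 0 ↔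
    {y : EuclideanSpace ℝ (Fin 2) | ‖y - p‖ = r₁} ∩
      {y : EuclideanSpace ℝ (Fin 2) | ‖y - q‖ = r₂} = {x} := by
  set S : AffineSubspace ℝ (EuclideanSpace ℝ (Fin 2)) := affineSpan ℝ ({p, q} : Set _) with hS
  have hpS : p ∈ S := subset_affineSpan ℝ _ (by simp)
  have hqS : q ∈ S := subset_affineSpan ℝ _ (by simp)
  have hSne : (S : Set (EuclideanSpace ℝ (Fin 2))).Nonempty := ⟨p, hpS⟩
  have hclosed : IsClosed (S : Set (EuclideanSpace ℝ (Fin 2))) :=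
    S.closed_of_finiteDimensional
  rw [← hclosed.mem_iff_infDist_zero hSne]
  constructor
  · -- x on the line ⇒ intersection = {x}
    intro hxS
    ext y
    simp only [Set.mem_inter_iff, Set.mem_setOf_eq, Set.mem_singleton_iff]
    constructor
    · rintro ⟨hy₁, hy₂⟩
      -- ⟪y - x, q - p⟫ = 0
      have hsq₁ : ‖y - p‖ ^ 2 = ‖x - p‖ ^ 2 := by rw [hy₁, hx₁]
      have hsq₂ : ‖y - q‖ ^ 2 = ‖x - q‖ ^ 2 := by rw [hy₂, hx₂]
      have expand : ∀ a b : EuclideanSpace ℝ (Fin 2),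
          ‖a - b‖ ^ 2 = ‖a‖ ^ 2 - 2 * ⟪a, b⟫ + ‖b‖ ^ 2 := by
        intro a b
        rw [@norm_sub_sq_real]
      have hperp : ⟪y - x, q - p⟫ = 0 := by
        rw [expand, expand] at hsq₁ hsq₂
        have := sub_eq_sub_iff_sub_eq_sub.mpr (congrArg₂ (· - ·) hsq₁ hsq₂)
        simp only [inner_sub_left, inner_sub_right]
        nlinarith [hsq₁, hsq₂]
      -- x ∈ line: x = p + t • (q - p)
      have hxmem : x -ᵥ p ∈ S.direction := AffineSubspace.vsub_mem_direction hxS hpS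
      have hdir : S.direction = Submodule.span ℝ {p -ᵥ q} := by
        rw [hS, direction_affineSpan, vectorSpan_pair]
      rw [hdir] at hxmem
      obtain ⟨t, ht⟩ := Submodule.mem_span_singleton.mp hxmem
      have hxp : x - p = t • (p - q) := ht.symm
      have hinner : ⟪y - x, x - p⟫ = 0 := by
        rw [hxp, inner_smul_right, show (p - q : EuclideanSpace ℝ (Fin 2)) = -(q - p) by abel,
          inner_neg_right, hperp]
        ring
      have hdecomp : y - p = (y - x) + (x - p) := by abel
      have hkey : ‖y - x‖ ^ 2 = 0 := by
        have := norm_add_sq_real (y - x) (x - p)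
        rw [← hdecomp, hinner] at this
        nlinarith [hsq₁]
      have : y - x = 0 := by
        have h0 : ‖y - x‖ = 0 := by nlinarith [hkey, norm_nonneg (y - x)]
        exact norm_eq_zero.mp h0
      rw [sub_eq_zero] at this
      exact this
    · rintro rfl; exact ⟨hx₁, hx₂⟩
  · -- intersection = {x} ⇒ x on line, via reflection
    intro hInt
    by_contra hxS
    haveI : Nonempty S := ⟨⟨p, hpS⟩⟩
    set x' := EuclideanGeometry.reflection S x with hx'
    have h₁ : ‖x' - p‖ = r₁ := by
      rw [← dist_eq_norm, dist_comm, EuclideanGeometry.dist_reflection_eq_of_mem S hpS,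
        dist_comm, dist_eq_norm, hx₁]
    have h₂ : ‖x' - q‖ = r₂ := by
      rw [← dist_eq_norm, dist_comm, EuclideanGeometry.dist_reflection_eq_of_mem S hqS,
        dist_comm, dist_eq_norm, hx₂]
    have hx'mem : x' ∈ ({x} : Set (EuclideanSpace ℝ (Fin 2))) := by
      rw [← hInt]; exact ⟨h₁, h₂⟩
    have : x' = x := hx'mem
    exact hxS ((EuclideanGeometry.reflection_eq_self_iff x).mp this)
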